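/- Let A be a complex Banach algebra, s a fixed nonzero complex number with |s| < 1, r > 2 a real number, and θ ≥ 0. Suppose f : A³ → A satisfies f(x, 0, a) = f(0, z, a) = f(x, z, 0) = 0 for all x, z, a ∈ A and, for all λ, μ, η ∈ T¹ and all x, y, z, w, a, b ∈ A, ‖f(λ(x+y), μ(z−w), η(a+b)) + f(λ(x−y), μ(z+w), η(a−b)) − λμη(2f(x,z,a) − 2f(x,w,b) + 2f(y,z,b) − 2f(y,w,a))‖ ≤ ‖s · D₂f(x, y, z, w, a, b)‖ + θ(‖x‖^r + ‖y‖^r)(‖z‖^r + ‖w‖^r)(‖a‖^r + ‖b‖^r). Then there exists a unique ℂ-trilinear mapping D : A³ → A such that ‖f(x, z, a) − D(x, z, a)‖ ≤ (2θ/(2^r − 2)) ‖x‖^r ‖z‖^r ‖a‖^r for all x, z, a ∈ A. If, in addition, f satisfies ‖f(xy, z, a) − f(x, z, a)y − x f(y, z, a)‖ ≤ θ(‖x‖^r + ‖y‖^r)‖z‖^r ‖a‖^r for all x, y, z, a ∈ A, and ‖f(x_{σ(1)}, x_{σ(2)}, x_{σ(3)}) − f(x₁, x₂, x₃)‖ ≤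 θ ‖x₁‖^r ‖x₂‖^r ‖x₃‖^r for all x₁, x₂, x₃ ∈ A and every permutation (σ(1), σ(2), σ(3)) of (1,2,3), then D is a permuting triderivation. -/

import Mathlib

/-- A mapping `f : X³ → Y` is *tri-additive* if it is additive in each variable. -/
def TriAdditive {X Y : Type*} [AddCommGroup X] [AddCommGroup Y]
    (f : X → X → X → Y) : Prop :=
  (∀ x x' z a : X, f (x + x') z a = f x z a + f x' z a) ∧
  (∀ x z z' a : X, f x (z + z') a = f x z a + f x z' a) ∧
  (∀ x z a a' : X, f x z (a + a') = f x z a + f x z a')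

/-- A mapping `f : X³ → Y` is *ℂ-trilinear* if it is ℂ-linear in each variable. -/
def CTrilinear {X Y : Type*} [AddCommGroup X] [Module ℂ X] [AddCommGroup Y] [Module ℂ Y]
    (f : X → X → X → Y) : Prop :=
  TriAdditive f ∧
  (∀ (c : ℂ) (x z a : X), f (c • x) z a = c • f x z a) ∧
  (∀ (c : ℂ) (x z a : X), f x (c • z) a = c • f x z a) ∧
  (∀ (c : ℂ) (x z a : X), f x z (c • a) = c • f x z a)

/-- `D₁f(x, y, z, w, a, b)`. -/
def D₁ {X Y : Type*} [AddCommGroup X] [Module ℂ X] [AddCommGroup Y] [Module ℂ Y]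
    (f : X → X → X → Y) (x y z w a b : X) : Y :=
  f (x + y) (z - w) (a + b) + f (x - y) (z + w) (a - b)
    - (2 : ℂ) • f x z a + (2 : ℂ) • f x w b - (2 : ℂ) • f y z b + (2 : ℂ) • f y w a

/-- `D₂f(x, y, z, w, a, b)`. -/
noncomputable def D₂ {X Y : Type*} [AddCommGroup X] [Module ℂ X] [AddCommGroup Y] [Module ℂ Y]
    (f : X → X → X → Y) (x y z w a b : X) : Y :=
  (2 : ℂ) • f ((2 : ℂ)⁻¹ • (x + y)) (z - w) (a + b)
    + (2 : ℂ) • f ((2 : ℂ)⁻¹ • (x - y)) (z + w) (a - b)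
    - (2 : ℂ) • f x z a + (2 : ℂ) • f x w b - (2 : ℂ) • f y z b + (2 : ℂ) • f y w a


/-- A ℂ-trilinear `D : A³ → A` is a *permuting triderivation* if it is a derivation in the
first variable and is invariant under every permutation of its three variables. -/
def PermutingTriderivation {A : Type*} [Ring A] [Module ℂ A]
    (D : A → A → A → A) : Prop :=
  CTrilinear D ∧
  (∀ x y z w : A, D (x * y) z w = D x z w * y + x * D y z w) ∧
  (∀ (σ : Equiv.Perm (Fin 3)) (x : Fin 3 → A),
    D (x (σ 0)) (x (σ 1)) (x (σ 2)) = D (x 0) (x 1) (x 2))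

open Filter


lemma exists_unimodular_avg (c : ℂ) (hc : ‖c‖ ≤ 1) :
    ∃ u v : ℂ, ‖u‖ = 1 ∧ ‖v‖ = 1 ∧ u + v = 2 * c := by
  rcases eq_or_ne c 0 with rfl | h0
  · exact ⟨1, -1, by norm_num, by norm_num, by ring⟩
  · have hm0 : 0 < ‖c‖ := norm_pos_iff.mpr h0
    have hm1 : ‖c‖ ^ 2 ≤ 1 := by nlinarith [hm0]
    set k : ℝ := Real.sqrt (1 - ‖c‖ ^ 2) / ‖c‖ with hk
    have hksq : k ^ 2 = (1 - ‖c‖ ^ 2) / ‖c‖ ^ 2 := by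
      rw [hk, div_pow, Real.sq_sqrt (by linarith)]
    have hnorm : ∀ ε : ℝ, ‖(1 : ℂ) + (ε : ℂ) * Complex.I‖ ^ 2 = 1 + ε ^ 2 := by
      intro ε
      rw [Complex.sq_norm]
      have : ((1 : ℂ) + (ε : ℂ) * Complex.I) = ((1 : ℝ) : ℂ) + (ε : ℂ) * Complex.I := by
        norm_num
      rw [this, Complex.normSq_add_mul_I]
      norm_num
    have key : ∀ ε : ℝ, ε ^ 2 = k ^ 2 → ‖c * (1 + (ε : ℂ) * Complex.I)‖ = 1 := by
      intro ε hε
      have h2 : ‖c * (1 + (ε : ℂ) * Complex.I)‖ ^ 2 = 1 := by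
        rw [norm_mul, mul_pow, hnorm, hε, hksq]
        have hne : ‖c‖ ≠ 0 := hm0.ne'
        field_simp
        ring
      have h3 : 0 ≤ ‖c * (1 + (ε : ℂ) * Complex.I)‖ := norm_nonneg _
      nlinarith
    refine ⟨c * (1 + (k : ℂ) * Complex.I), c * (1 + ((-k : ℝ) : ℂ) * Complex.I), key k rfl,
      key (-k) (by ring), ?_⟩
    push_cast
    ring

lemma smul_two_cancel {N : Type*} [AddCommGroup N] [Module ℂ N] {y y' : N}
    (h : (2 : ℂ) • y = (2 : ℂ) • y') : y = y' := by
  have h2 := congrArg (fun v => (2 : ℂ)⁻¹ • v) h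
  simpa [smul_smul, show ((2:ℂ)⁻¹ * 2) = 1 by norm_num] using h2

lemma chom {M N : Type*} [AddCommGroup M] [Module ℂ M] [AddCommGroup N] [Module ℂ N]
    {g : M → N} (hadd : ∀ u v, g (u + v) = g u + g v)
    (hT : ∀ l : ℂ, ‖l‖ = 1 → ∀ u, g (l • u) = l • g u) :
    ∀ (c : ℂ) (u : M), g (c • u) = c • g u := by
  have hdouble : ∀ u, g ((2 : ℂ) • u) = (2 : ℂ) • g u := by
    intro u
    rw [two_smul, hadd, ← two_smul ℂ]
  have hpow : ∀ (n : ℕ) (u : M), g ((2 : ℂ) ^ n • u) = (2 : ℂ) ^ n • g u := by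
    intro n
    induction n with
    | zero => intro u; simp
    | succ n ih =>
      intro u
      have : ((2:ℂ) ^ (n+1)) • u = (2:ℂ) ^ n • ((2:ℂ) • u) := by
        rw [smul_smul, ← pow_succ]
      rw [this, ih, hdouble, smul_smul, ← pow_succ]
  have hsmall : ∀ c : ℂ, ‖c‖ ≤ 1 → ∀ u : M, g (c • u) = c • g u := by
    intro c hc u
    obtain ⟨p, q, hp, hq, hpq⟩ := exists_unimodular_avg c hc
    apply smul_two_cancel (N := N)
    calc (2 : ℂ) • g (c • u) = g ((2 : ℂ) • c • u) := (hdouble _).symm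
      _ = g ((p + q) • u) := by rw [smul_smul, ← hpq]
      _ = p • g u + q • g u := by rw [add_smul, hadd, hT p hp, hT q hq]
      _ = (2 : ℂ) • c • g u := by rw [← add_smul, hpq, smul_smul]
  intro c u
  obtain ⟨n0, hn0⟩ := exists_nat_ge ‖c‖
  have hn : ‖c‖ ≤ 2 ^ n0 := by
    refine hn0.trans ?_
    exact_mod_cast Nat.le_of_lt (by exact_mod_cast (Nat.lt_two_pow_self (n := n0)))
  have h2n : ((2 : ℂ) ^ n0) ≠ 0 := pow_ne_zero _ two_ne_zero
  have hc' : ‖c / 2 ^ n0‖ ≤ 1 := by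
    have h2 : ‖(2:ℂ)‖ = 2 := by norm_num
    rw [norm_div, norm_pow, h2, div_le_one (by positivity)]
    exact hn
  have harg : c • u = (2 : ℂ) ^ n0 • ((c / 2 ^ n0) • u) := by
    rw [smul_smul]
    congr 1
    field_simp
  rw [harg, hpow, hsmall _ hc', smul_smul]
  congr 1
  field_simp

lemma eq_zero_of_norm_le_geom {N : Type*} [NormedAddCommGroup N] {v : N} {K ρ : ℝ}
    (hρ0 : 0 ≤ ρ) (hρ1 : ρ < 1) (hb : ∀ n : ℕ, ‖v‖ ≤ K * ρ ^ n) : v = 0 := by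
  have h1 : Tendsto (fun n : ℕ => K * ρ ^ n) atTop (nhds 0) := by
    simpa using (tendsto_pow_atTop_nhds_zero_of_lt_one hρ0 hρ1).const_mul K
  have h2 : ‖v‖ ≤ 0 := le_of_tendsto_of_tendsto' tendsto_const_nhds h1 hb
  simpa using le_antisymm h2 (norm_nonneg v)


variable {A : Type*} [NormedRing A] [NormedAlgebra ℂ A] [CompleteSpace A]

theorem stmt_7 (s : ℂ) (hs0 : s ≠ 0) (hs1 : ‖s‖ < 1) (r θ : ℝ) (hr : 2 < r) (hθ : 0 ≤ θ)
    (f : A → A → A → A)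
    (hzero : ∀ x z a : A, f x 0 a = 0 ∧ f 0 z a = 0 ∧ f x z 0 = 0)
    (hineq : ∀ l m e : ℂ, ‖l‖ = 1 → ‖m‖ = 1 → ‖e‖ = 1 → ∀ x y z w a b : A,
      ‖f (l • (x + y)) (m • (z - w)) (e • (a + b))
          + f (l • (x - y)) (m • (z + w)) (e • (a - b))
          - (l * m * e) • ((2 : ℂ) • f x z a - (2 : ℂ) • f x w b
              + (2 : ℂ) • f y z b - (2 : ℂ) • f y w a)‖
        ≤ ‖s • D₂ f x y z w a b‖ + θ * (‖x‖ ^ r + ‖y‖ ^ r) * (‖z‖ ^ r + ‖w‖ ^ r) * (‖a‖ ^ r + ‖b‖ ^ r)) :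
    (∃! D : A → A → A → A, CTrilinear D ∧
      ∀ x z a : A, ‖f x z a - D x z a‖ ≤ 2 * θ / ((2 : ℝ) ^ r - 2) * (‖x‖ ^ r * ‖z‖ ^ r * ‖a‖ ^ r)) ∧
    ((∀ x y z a : A,
      ‖f (x * y) z a - f x z a * y - x * f y z a‖
        ≤ θ * (‖x‖ ^ r + ‖y‖ ^ r) * ‖z‖ ^ r * ‖a‖ ^ r) →
     (∀ (σ : Equiv.Perm (Fin 3)) (x : Fin 3 → A),
      ‖f (x (σ 0)) (x (σ 1)) (x (σ 2)) - f (x 0) (x 1) (x 2)‖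
        ≤ θ * ‖x 0‖ ^ r * ‖x 1‖ ^ r * ‖x 2‖ ^ r) →
     ∀ D : A → A → A → A,
       (CTrilinear D ∧ ∀ x z a : A, ‖f x z a - D x z a‖ ≤ 2 * θ / ((2 : ℝ) ^ r - 2) * (‖x‖ ^ r * ‖z‖ ^ r * ‖a‖ ^ r)) →
       PermutingTriderivation D) := by
  -- preliminaries
  have hr1 : (1:ℝ) < r := by linarith
  have hrne : r ≠ 0 := by positivity
  have h2rpos : (0:ℝ) < (2:ℝ) ^ r := Real.rpow_pos_of_pos (by norm_num) r
  have h2r : (2:ℝ) < (2:ℝ) ^ r := by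
    nth_rewrite 1 [show (2:ℝ) = (2:ℝ) ^ (1:ℝ) from (Real.rpow_one 2).symm]
    exact (Real.rpow_lt_rpow_left_iff (by norm_num)).mpr hr1
  have h4r : (4:ℝ) < (2:ℝ) ^ r := by
    have h42 : (2:ℝ) ^ (2:ℝ) = 4 := by
      have hc : ((2:ℕ):ℝ) = (2:ℝ) := by norm_num
      calc (2:ℝ) ^ (2:ℝ) = (2:ℝ) ^ ((2:ℕ):ℝ) := by rw [hc]
        _ = (2:ℝ) ^ (2:ℕ) := Real.rpow_natCast 2 2
        _ = 4 := by norm_num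
    calc (4:ℝ) = 2 ^ (2:ℝ) := h42.symm
      _ < 2 ^ r := (Real.rpow_lt_rpow_left_iff (by norm_num)).mpr hr
  set t : ℝ := ((2:ℝ) ^ r)⁻¹ with ht
  have ht_pos : 0 < t := by positivity
  have htinv : t * (2:ℝ) ^ r = 1 := inv_mul_cancel₀ h2rpos.ne'
  have h2t : 2 * t < 1 := by nlinarith
  have h4t : 4 * t < 1 := by nlinarith
  have h8t3 : 8 * t ^ 3 < 1 := by nlinarith [pow_pos ht_pos 3, sq_nonneg t, mul_pos ht_pos ht_pos]
  have hn2 : ‖(2:ℂ)‖ = 2 := by norm_num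
  have hnh : ‖(2:ℂ)⁻¹‖ = 2⁻¹ := by norm_num
  have hsc : ∀ (n:ℕ) (v : A), ‖(2:ℂ) ^ n • v‖ = 2 ^ n * ‖v‖ := by
    intro n v; rw [norm_smul, norm_pow, hn2]
  have hscr : ∀ (n:ℕ) (x : A), ‖((2:ℂ)⁻¹) ^ n • x‖ ^ r = t ^ n * ‖x‖ ^ r := by
    intro n x
    rw [norm_smul, norm_pow, hnh, Real.mul_rpow (by positivity) (norm_nonneg x)]
    congr 1
    rw [← Real.rpow_natCast ((2:ℝ)⁻¹) n, ← Real.rpow_mul (by norm_num), mul_comm,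
      Real.rpow_mul (by norm_num), Real.rpow_natCast, Real.inv_rpow (by norm_num), ht]
  have hz1 : ∀ z a : A, f 0 z a = 0 := fun z a => (hzero 0 z a).2.1
  have hz2 : ∀ x a : A, f x 0 a = 0 := fun x a => (hzero x 0 a).1
  have hz3 : ∀ x z : A, f x z 0 = 0 := fun x z => (hzero x z 0).2.2
  set B : ℝ := 2 * θ / ((2:ℝ) ^ r - 2) with hB
  have hB0 : 0 ≤ B := by
    apply div_nonneg (by linarith) (by linarith)
  -- the key estimate
  have key : ∀ x z a : A, ‖f ((2:ℂ) • x) z a - (2:ℂ) • f x z a‖ ≤ 2 * θ * (‖x‖ ^ r * ‖z‖ ^ r * ‖a‖ ^ r) := by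
    intro x z a
    have h := hineq 1 1 1 (by norm_num) (by norm_num) (by norm_num) x x z 0 a 0
    have e1 : (2:ℂ)⁻¹ • (x + x) = x := by
      rw [← two_smul ℂ x, smul_smul]; norm_num
    have hD2 : D₂ f x x z 0 a 0 = 0 := by
      simp [D₂, e1, hz1, hz2, hz3]
    rw [hD2] at h
    simp only [one_smul, one_mul, smul_zero, sub_zero, add_zero, sub_self, norm_zero,
      Real.zero_rpow hrne, hz1, hz2, hz3, zero_add] at h
    rw [two_smul]
    calc ‖f (x + x) z a - (2:ℂ) • f x z a‖ ≤ θ * (‖x‖ ^ r + ‖x‖ ^ r) * ‖z‖ ^ r * ‖a‖ ^ r := by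
          simpa using h
      _ = 2 * θ * (‖x‖ ^ r * ‖z‖ ^ r * ‖a‖ ^ r) := by ring
  -- the approximating sequence
  set g : A → A → A → ℕ → A := fun x z a n => (2:ℂ) ^ n • f (((2:ℂ)⁻¹) ^ n • x) z a with hg
  have htel : ∀ x z a : A, ∀ n : ℕ,
      dist (g x z a n) (g x z a (n+1)) ≤ (2 * θ * (‖x‖ ^ r * ‖z‖ ^ r * ‖a‖ ^ r) * t) * (2*t) ^ n := by
    intro x z a n
    have e2 : ((2:ℂ)⁻¹) ^ n • x = (2:ℂ) • (((2:ℂ)⁻¹) ^ (n+1) • x) := by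
      rw [smul_smul]
      congr 1
      rw [pow_succ]
      field_simp
    have e3 : g x z a (n+1) = (2:ℂ) ^ n • ((2:ℂ) • f (((2:ℂ)⁻¹) ^ (n+1) • x) z a) := by
      rw [hg]
      simp only
      rw [smul_smul, pow_succ]
    rw [dist_eq_norm]
    calc ‖g x z a n - g x z a (n+1)‖
        = ‖(2:ℂ) ^ n • (f ((2:ℂ) • (((2:ℂ)⁻¹) ^ (n+1) • x)) z a - (2:ℂ) • f (((2:ℂ)⁻¹) ^ (n+1) • x) z a)‖ := by
          rw [smul_sub, e3, hg]; simp only; rw [← e2]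
      _ = 2 ^ n * ‖f ((2:ℂ) • (((2:ℂ)⁻¹) ^ (n+1) • x)) z a - (2:ℂ) • f (((2:ℂ)⁻¹) ^ (n+1) • x) z a‖ :=
          hsc n _
      _ ≤ 2 ^ n * (2 * θ * (‖((2:ℂ)⁻¹) ^ (n+1) • x‖ ^ r * ‖z‖ ^ r * ‖a‖ ^ r)) := by
          have := key (((2:ℂ)⁻¹) ^ (n+1) • x) z a
          gcongr
      _ = (2 * θ * (‖x‖ ^ r * ‖z‖ ^ r * ‖a‖ ^ r) * t) * (2*t) ^ n := by
          rw [hscr]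
          rw [pow_succ, mul_pow]
          ring
  have hcau : ∀ x z a : A, ∃ L : A, Tendsto (fun n => g x z a n) atTop (nhds L) := by
    intro x z a
    exact cauchySeq_tendsto_of_complete
      (cauchySeq_of_le_geometric (2*t) _ h2t (htel x z a))
  choose D0 hD0 using hcau
  -- bound for D0
  have hbnd0 : ∀ x z a : A, ‖f x z a - D0 x z a‖ ≤ B * (‖x‖ ^ r * ‖z‖ ^ r * ‖a‖ ^ r) := by
    intro x z a
    have h1 := dist_le_of_le_geometric_of_tendsto₀ (2*t) _ h2t (htel x z a) (hD0 x z a)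
    have hg0 : g x z a 0 = f x z a := by rw [hg]; simp
    rw [hg0, dist_eq_norm] at h1
    refine h1.trans_eq ?_
    rw [hB]
    have h2rt : (2:ℝ) ^ r = t⁻¹ := by rw [ht, inv_inv]
    have hne1 : (1 : ℝ) - 2*t ≠ 0 := by nlinarith
    rw [h2rt]
    rw [show t⁻¹ - 2 = (1 - 2*t)/t from by field_simp [ht_pos.ne'], div_div_eq_mul_div]
    ring
  -- convergence to any trilinear map satisfying the bound
  have hflim : ∀ D : A → A → A → A, (∀ (c : ℂ) (x z a : A), D (c • x) z a = c • D x z a) →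
      (∀ x z a : A, ‖f x z a - D x z a‖ ≤ B * (‖x‖ ^ r * ‖z‖ ^ r * ‖a‖ ^ r)) →
      ∀ x z a : A, Tendsto (fun n => g x z a n) atTop (nhds (D x z a)) := by
    intro D hsm hbd x z a
    rw [tendsto_iff_norm_sub_tendsto_zero]
    apply squeeze_zero (g := fun n => (B * (‖x‖ ^ r * ‖z‖ ^ r * ‖a‖ ^ r)) * (2*t) ^ n)
      (fun n => norm_nonneg _)
    · intro n
      have e1 : D x z a = (2:ℂ) ^ n • D (((2:ℂ)⁻¹) ^ n • x) z a := by
        rw [hsm, smul_smul, ← mul_pow]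
        norm_num
      calc ‖g x z a n - D x z a‖
          = ‖(2:ℂ) ^ n • (f (((2:ℂ)⁻¹) ^ n • x) z a - D (((2:ℂ)⁻¹) ^ n • x) z a)‖ := by
            rw [smul_sub, hg, ← e1]
        _ = 2 ^ n * ‖f (((2:ℂ)⁻¹) ^ n • x) z a - D (((2:ℂ)⁻¹) ^ n • x) z a‖ := hsc n _
        _ ≤ 2 ^ n * (B * (‖((2:ℂ)⁻¹) ^ n • x‖ ^ r * ‖z‖ ^ r * ‖a‖ ^ r)) := by
            have := hbd (((2:ℂ)⁻¹) ^ n • x) z a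
            gcongr
        _ = (B * (‖x‖ ^ r * ‖z‖ ^ r * ‖a‖ ^ r)) * (2*t) ^ n := by
            rw [hscr, mul_pow]
            ring
    · simpa using (tendsto_pow_atTop_nhds_zero_of_lt_one (by positivity) h2t).const_mul
        (B * (‖x‖ ^ r * ‖z‖ ^ r * ‖a‖ ^ r))
    -- zeros of D0
  have hzD1 : ∀ z a : A, D0 0 z a = 0 := by
    intro z a
    refine tendsto_nhds_unique (hD0 0 z a) ?_
    have hconst : (fun n => g 0 z a n) = fun _ => (0:A) := by
      funext n; simp [hg, hz1]
    rw [hconst]; exact tendsto_const_nhds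
  have hzD2 : ∀ x a : A, D0 x 0 a = 0 := by
    intro x a
    refine tendsto_nhds_unique (hD0 x 0 a) ?_
    have hconst : (fun n => g x 0 a n) = fun _ => (0:A) := by
      funext n; simp [hg, hz2]
    rw [hconst]; exact tendsto_const_nhds
  have hzD3 : ∀ x z : A, D0 x z 0 = 0 := by
    intro x z
    refine tendsto_nhds_unique (hD0 x z 0) ?_
    have hconst : (fun n => g x z 0 n) = fun _ => (0:A) := by
      funext n; simp [hg, hz3]
    rw [hconst]; exact tendsto_const_nhds
  -- the limit functional inequality
  have hshift : Tendsto (fun n : ℕ => n + 1) atTop atTop := tendsto_add_atTop_nat 1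
  have hEineq : ∀ l m e : ℂ, ‖l‖ = 1 → ‖m‖ = 1 → ‖e‖ = 1 → ∀ x y z w a b : A,
      ‖D0 (l•(x+y)) (m•(z-w)) (e•(a+b)) + D0 (l•(x-y)) (m•(z+w)) (e•(a-b))
        - (l*m*e) • ((2:ℂ)•D0 x z a - (2:ℂ)•D0 x w b + (2:ℂ)•D0 y z b - (2:ℂ)•D0 y w a)‖
      ≤ ‖s‖ * ‖D0 (x+y) (z-w) (a+b) + D0 (x-y) (z+w) (a-b)
        - (2:ℂ)•D0 x z a + (2:ℂ)•D0 x w b - (2:ℂ)•D0 y z b + (2:ℂ)•D0 y w a‖ := by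
    intro l m e hl hm he x y z w a b
    have ea1 : ∀ n : ℕ, ((2:ℂ)⁻¹)^n • (l•(x+y)) = l • (((2:ℂ)⁻¹)^n • x + ((2:ℂ)⁻¹)^n • y) := by
      intro n; rw [smul_comm, smul_add]
    have ea2 : ∀ n : ℕ, ((2:ℂ)⁻¹)^n • (l•(x-y)) = l • (((2:ℂ)⁻¹)^n • x - ((2:ℂ)⁻¹)^n • y) := by
      intro n; rw [smul_comm, smul_sub]
    have eb1 : ∀ n : ℕ, ((2:ℂ)⁻¹)^(n+1) • (x+y) = (2:ℂ)⁻¹ • (((2:ℂ)⁻¹)^n • x + ((2:ℂ)⁻¹)^n • y) := by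
      intro n
      rw [smul_add, smul_add, smul_smul, smul_smul, ← pow_succ']
    have eb2 : ∀ n : ℕ, ((2:ℂ)⁻¹)^(n+1) • (x-y) = (2:ℂ)⁻¹ • (((2:ℂ)⁻¹)^n • x - ((2:ℂ)⁻¹)^n • y) := by
      intro n
      rw [smul_sub, smul_sub, smul_smul, smul_smul, ← pow_succ']
    have hL : Tendsto (fun n => (2:ℂ)^n •
        (f (l • (((2:ℂ)⁻¹)^n • x + ((2:ℂ)⁻¹)^n • y)) (m•(z-w)) (e•(a+b))
          + f (l • (((2:ℂ)⁻¹)^n • x - ((2:ℂ)⁻¹)^n • y)) (m•(z+w)) (e•(a-b))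
          - (l*m*e) • ((2:ℂ) • f (((2:ℂ)⁻¹)^n • x) z a - (2:ℂ) • f (((2:ℂ)⁻¹)^n • x) w b
              + (2:ℂ) • f (((2:ℂ)⁻¹)^n • y) z b - (2:ℂ) • f (((2:ℂ)⁻¹)^n • y) w a))) atTop
        (nhds (D0 (l•(x+y)) (m•(z-w)) (e•(a+b)) + D0 (l•(x-y)) (m•(z+w)) (e•(a-b))
          - (l*m*e) • ((2:ℂ)•D0 x z a - (2:ℂ)•D0 x w b + (2:ℂ)•D0 y z b - (2:ℂ)•D0 y w a))) := by
      have combo := ((hD0 (l•(x+y)) (m•(z-w)) (e•(a+b))).add (hD0 (l•(x-y)) (m•(z+w)) (e•(a-b)))).sub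
        ((((((hD0 x z a).const_smul (2:ℂ)).sub ((hD0 x w b).const_smul (2:ℂ))).add
          ((hD0 y z b).const_smul (2:ℂ))).sub ((hD0 y w a).const_smul (2:ℂ))).const_smul (l*m*e))
      refine Tendsto.congr (fun n => ?_) combo
      simp only [hg]
      rw [ea1 n, ea2 n]
      module
    have hT : Tendsto (fun n => (2:ℂ)^n •
        D₂ f (((2:ℂ)⁻¹)^n • x) (((2:ℂ)⁻¹)^n • y) z w a b) atTop
        (nhds (D0 (x+y) (z-w) (a+b) + D0 (x-y) (z+w) (a-b)
          - (2:ℂ)•D0 x z a + (2:ℂ)•D0 x w b - (2:ℂ)•D0 y z b + (2:ℂ)•D0 y w a)) := by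
      have combo := ((((((hD0 (x+y) (z-w) (a+b)).comp hshift).add
          ((hD0 (x-y) (z+w) (a-b)).comp hshift)).sub
          ((hD0 x z a).const_smul (2:ℂ))).add ((hD0 x w b).const_smul (2:ℂ))).sub
          ((hD0 y z b).const_smul (2:ℂ))).add ((hD0 y w a).const_smul (2:ℂ))
      refine Tendsto.congr (fun n => ?_) combo
      simp only [hg, Function.comp]
      rw [eb1 n, eb2 n, D₂]
      module
    have hcomp : ∀ n : ℕ, ‖(2:ℂ)^n •
        (f (l • (((2:ℂ)⁻¹)^n • x + ((2:ℂ)⁻¹)^n • y)) (m•(z-w)) (e•(a+b))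
          + f (l • (((2:ℂ)⁻¹)^n • x - ((2:ℂ)⁻¹)^n • y)) (m•(z+w)) (e•(a-b))
          - (l*m*e) • ((2:ℂ) • f (((2:ℂ)⁻¹)^n • x) z a - (2:ℂ) • f (((2:ℂ)⁻¹)^n • x) w b
              + (2:ℂ) • f (((2:ℂ)⁻¹)^n • y) z b - (2:ℂ) • f (((2:ℂ)⁻¹)^n • y) w a))‖
        ≤ ‖s‖ * ‖(2:ℂ)^n • D₂ f (((2:ℂ)⁻¹)^n • x) (((2:ℂ)⁻¹)^n • y) z w a b‖
          + (θ * (‖x‖^r + ‖y‖^r) * (‖z‖^r + ‖w‖^r) * (‖a‖^r + ‖b‖^r)) * (2*t)^n := by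
      intro n
      have h := hineq l m e hl hm he (((2:ℂ)⁻¹)^n • x) (((2:ℂ)⁻¹)^n • y) z w a b
      rw [hsc, hsc]
      calc 2^n * ‖f (l • (((2:ℂ)⁻¹)^n • x + ((2:ℂ)⁻¹)^n • y)) (m•(z-w)) (e•(a+b))
          + f (l • (((2:ℂ)⁻¹)^n • x - ((2:ℂ)⁻¹)^n • y)) (m•(z+w)) (e•(a-b))
          - (l*m*e) • ((2:ℂ) • f (((2:ℂ)⁻¹)^n • x) z a - (2:ℂ) • f (((2:ℂ)⁻¹)^n • x) w b
              + (2:ℂ) • f (((2:ℂ)⁻¹)^n • y) z b - (2:ℂ) • f (((2:ℂ)⁻¹)^n • y) w a)‖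
          ≤ 2^n * (‖s • D₂ f (((2:ℂ)⁻¹)^n • x) (((2:ℂ)⁻¹)^n • y) z w a b‖
            + θ * (‖((2:ℂ)⁻¹)^n • x‖^r + ‖((2:ℂ)⁻¹)^n • y‖^r) * (‖z‖^r + ‖w‖^r) * (‖a‖^r + ‖b‖^r)) := by
            exact mul_le_mul_of_nonneg_left h (by positivity)
        _ = ‖s‖ * (2^n * ‖D₂ f (((2:ℂ)⁻¹)^n • x) (((2:ℂ)⁻¹)^n • y) z w a b‖)
            + (θ * (‖x‖^r + ‖y‖^r) * (‖z‖^r + ‖w‖^r) * (‖a‖^r + ‖b‖^r)) * (2*t)^n := by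
            rw [norm_smul, hscr, hscr, mul_pow]
            ring
    have herr : Tendsto (fun n : ℕ =>
        (θ * (‖x‖^r + ‖y‖^r) * (‖z‖^r + ‖w‖^r) * (‖a‖^r + ‖b‖^r)) * (2*t)^n) atTop (nhds 0) := by
      simpa using (tendsto_pow_atTop_nhds_zero_of_lt_one (by positivity) h2t).const_mul
        (θ * (‖x‖^r + ‖y‖^r) * (‖z‖^r + ‖w‖^r) * (‖a‖^r + ‖b‖^r))
    have hfin := le_of_tendsto_of_tendsto' hL.norm ((hT.norm.const_mul ‖s‖).add herr) hcomp
    simpa using hfin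
    -- exact functional equation for D0
  have hfe : ∀ x y z w a b : A, D0 (x+y) (z-w) (a+b) + D0 (x-y) (z+w) (a-b)
      = (2:ℂ)•D0 x z a - (2:ℂ)•D0 x w b + (2:ℂ)•D0 y z b - (2:ℂ)•D0 y w a := by
    intro x y z w a b
    have h := hEineq 1 1 1 (by norm_num) (by norm_num) (by norm_num) x y z w a b
    simp only [one_smul, one_mul] at h
    have hEq : D0 (x+y) (z-w) (a+b) + D0 (x-y) (z+w) (a-b)
        - ((2:ℂ)•D0 x z a - (2:ℂ)•D0 x w b + (2:ℂ)•D0 y z b - (2:ℂ)•D0 y w a)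
        = D0 (x+y) (z-w) (a+b) + D0 (x-y) (z+w) (a-b)
        - (2:ℂ)•D0 x z a + (2:ℂ)•D0 x w b - (2:ℂ)•D0 y z b + (2:ℂ)•D0 y w a := by abel
    rw [hEq] at h
    have h0 : ‖D0 (x+y) (z-w) (a+b) + D0 (x-y) (z+w) (a-b)
        - (2:ℂ)•D0 x z a + (2:ℂ)•D0 x w b - (2:ℂ)•D0 y z b + (2:ℂ)•D0 y w a‖ ≤ 0 := by
      nlinarith [norm_nonneg (D0 (x+y) (z-w) (a+b) + D0 (x-y) (z+w) (a-b)
        - (2:ℂ)•D0 x z a + (2:ℂ)•D0 x w b - (2:ℂ)•D0 y z b + (2:ℂ)•D0 y w a)]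
    have hz0 := norm_le_zero_iff.mp h0
    apply eq_of_sub_eq_zero
    rw [hEq]
    exact hz0
  -- Jensen equations in each slot
  have hJ1 : ∀ x y z a : A, D0 (x+y) z a + D0 (x-y) z a = (2:ℂ) • D0 x z a := by
    intro x y z a
    have h := hfe x y z 0 a 0
    simpa [hzD1, hzD2, hzD3] using h
  have hJ2 : ∀ x z w a : A, D0 x (z-w) a + D0 x (z+w) a = (2:ℂ) • D0 x z a := by
    intro x z w a
    have h := hfe x 0 z w a 0
    simpa [hzD1, hzD2, hzD3] using h
  have hJ3 : ∀ x z a b : A, D0 x z (a+b) + D0 x z (a-b) = (2:ℂ) • D0 x z a := by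
    intro x z a b
    have h := hfe x 0 z 0 a b
    simpa [hzD1, hzD2, hzD3] using h
  -- doubling
  have hdbl1 : ∀ x z a : A, D0 ((2:ℂ)•x) z a = (2:ℂ) • D0 x z a := by
    intro x z a
    have h := hJ1 x x z a
    rw [sub_self, hzD1, add_zero, ← two_smul ℂ x] at h
    exact h
  have hdbl2 : ∀ x z a : A, D0 x ((2:ℂ)•z) a = (2:ℂ) • D0 x z a := by
    intro x z a
    have h := hJ2 x z z a
    rw [sub_self, hzD2, zero_add, ← two_smul ℂ z] at h
    exact h
  have hdbl3 : ∀ x z a : A, D0 x z ((2:ℂ)•a) = (2:ℂ) • D0 x z a := by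
    intro x z a
    have h := hJ3 x z a a
    rw [sub_self, hzD3, add_zero, ← two_smul ℂ a] at h
    exact h
  -- additivity
  have hadd1 : ∀ u v z a : A, D0 (u+v) z a = D0 u z a + D0 v z a := by
    intro u v z a
    have e1 : ((2:ℂ)⁻¹ • (u+v)) + ((2:ℂ)⁻¹ • (u-v)) = u := by
      rw [← smul_add, show (u+v) + (u-v) = (2:ℂ)•u from by rw [two_smul]; abel, smul_smul]
      norm_num
    have e2 : ((2:ℂ)⁻¹ • (u+v)) - ((2:ℂ)⁻¹ • (u-v)) = v := by
      rw [← smul_sub, show (u+v) - (u-v) = (2:ℂ)•v from by rw [two_smul]; abel, smul_smul]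
      norm_num
    have h := hJ1 ((2:ℂ)⁻¹ • (u+v)) ((2:ℂ)⁻¹ • (u-v)) z a
    rw [e1, e2, ← hdbl1, smul_smul] at h
    rw [show (2:ℂ) * (2:ℂ)⁻¹ = 1 from by norm_num, one_smul] at h
    exact h.symm
  have hadd2 : ∀ x u v a : A, D0 x (u+v) a = D0 x u a + D0 x v a := by
    intro x u v a
    have e1 : ((2:ℂ)⁻¹ • (u+v)) - ((2:ℂ)⁻¹ • (v-u)) = u := by
      rw [← smul_sub, show (u+v) - (v-u) = (2:ℂ)•u from by rw [two_smul]; abel, smul_smul]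
      norm_num
    have e2 : ((2:ℂ)⁻¹ • (u+v)) + ((2:ℂ)⁻¹ • (v-u)) = v := by
      rw [← smul_add, show (u+v) + (v-u) = (2:ℂ)•v from by rw [two_smul]; abel, smul_smul]
      norm_num
    have h := hJ2 x ((2:ℂ)⁻¹ • (u+v)) ((2:ℂ)⁻¹ • (v-u)) a
    rw [e1, e2, ← hdbl2, smul_smul] at h
    rw [show (2:ℂ) * (2:ℂ)⁻¹ = 1 from by norm_num, one_smul] at h
    exact h.symm
  have hadd3 : ∀ x z u v : A, D0 x z (u+v) = D0 x z u + D0 x z v := by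
    intro x z u v
    have e1 : ((2:ℂ)⁻¹ • (u+v)) + ((2:ℂ)⁻¹ • (u-v)) = u := by
      rw [← smul_add, show (u+v) + (u-v) = (2:ℂ)•u from by rw [two_smul]; abel, smul_smul]
      norm_num
    have e2 : ((2:ℂ)⁻¹ • (u+v)) - ((2:ℂ)⁻¹ • (u-v)) = v := by
      rw [← smul_sub, show (u+v) - (u-v) = (2:ℂ)•v from by rw [two_smul]; abel, smul_smul]
      norm_num
    have h := hJ3 x z ((2:ℂ)⁻¹ • (u+v)) ((2:ℂ)⁻¹ • (u-v))
    rw [e1, e2, ← hdbl3, smul_smul] at h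
    rw [show (2:ℂ) * (2:ℂ)⁻¹ = 1 from by norm_num, one_smul] at h
    exact h.symm
  -- T¹-homogeneity
  have hT1 : ∀ l : ℂ, ‖l‖ = 1 → ∀ x z a : A, D0 (l•x) z a = l • D0 x z a := by
    intro l hl x z a
    have h := hEineq l 1 1 hl (by norm_num) (by norm_num) x 0 z 0 a 0
    simp only [one_smul, one_mul, mul_one, add_zero, sub_zero] at h
    simp only [hzD1, hzD2, hzD3, smul_zero, sub_zero, add_zero] at h
    rw [show D0 x z a + D0 x z a - (2:ℂ)•D0 x z a = 0 from by rw [← two_smul ℂ]; abel,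
      norm_zero, mul_zero] at h
    have h0 := norm_le_zero_iff.mp h
    rw [sub_eq_zero] at h0
    apply smul_two_cancel
    rw [two_smul, h0, smul_comm]
  have hT2 : ∀ m : ℂ, ‖m‖ = 1 → ∀ x z a : A, D0 x (m•z) a = m • D0 x z a := by
    intro m hm x z a
    have h := hEineq 1 m 1 (by norm_num) hm (by norm_num) x 0 z 0 a 0
    simp only [one_smul, one_mul, mul_one, add_zero, sub_zero] at h
    simp only [hzD1, hzD2, hzD3, smul_zero, sub_zero, add_zero] at h
    rw [show D0 x z a + D0 x z a - (2:ℂ)•D0 x z a = 0 from by rw [← two_smul ℂ]; abel,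
      norm_zero, mul_zero] at h
    have h0 := norm_le_zero_iff.mp h
    rw [sub_eq_zero] at h0
    apply smul_two_cancel
    rw [two_smul, h0, smul_comm]
  have hT3 : ∀ e : ℂ, ‖e‖ = 1 → ∀ x z a : A, D0 x z (e•a) = e • D0 x z a := by
    intro e he x z a
    have h := hEineq 1 1 e (by norm_num) (by norm_num) he x 0 z 0 a 0
    simp only [one_smul, one_mul, mul_one, add_zero, sub_zero] at h
    simp only [hzD1, hzD2, hzD3, smul_zero, sub_zero, add_zero] at h
    rw [show D0 x z a + D0 x z a - (2:ℂ)•D0 x z a = 0 from by rw [← two_smul ℂ]; abel,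
      norm_zero, mul_zero] at h
    have h0 := norm_le_zero_iff.mp h
    rw [sub_eq_zero] at h0
    apply smul_two_cancel
    rw [two_smul, h0, smul_comm]
  -- full trilinearity
  have hCT0 : CTrilinear D0 := by
    refine ⟨⟨fun x x' z a => hadd1 x x' z a, fun x z z' a => hadd2 x z z' a,
      fun x z a a' => hadd3 x z a a'⟩, ?_, ?_, ?_⟩
    · intro c x z a
      exact chom (g := fun u => D0 u z a) (fun u v => hadd1 u v z a)
        (fun l hl u => hT1 l hl u z a) c x
    · intro c x z a
      exact chom (g := fun u => D0 x u a) (fun u v => hadd2 x u v a)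
        (fun l hl u => hT2 l hl x u a) c z
    · intro c x z a
      exact chom (g := fun u => D0 x z u) (fun u v => hadd3 x z u v)
        (fun l hl u => hT3 l hl x z u) c a
  constructor
  · -- existence and uniqueness
    refine ⟨D0, ⟨hCT0, hbnd0⟩, ?_⟩
    intro D' hD'
    funext x z a
    exact tendsto_nhds_unique (hflim D' hD'.1.2.1 hD'.2 x z a) (hD0 x z a)
  · -- the triderivation property
    intro hder hperm D hDp
    obtain ⟨hCT, hbd⟩ := hDp
    have hlimD := hflim D hCT.2.1 hbd
    have hone : ∀ n : ℕ, (2:ℂ)^n * ((2:ℂ)⁻¹)^n = 1 := by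
      intro n; rw [← mul_pow]; norm_num
    refine ⟨hCT, ?_, ?_⟩
    · -- derivation in the first variable
      intro x y z w
      have h2n : Tendsto (fun n : ℕ => 2*n) atTop atTop :=
        Filter.tendsto_atTop_atTop.mpr (fun b => ⟨b, fun a ha => by omega⟩)
      have hmain : Tendsto (fun n => g (x*y) z w (2*n)) atTop (nhds (D (x*y) z w)) :=
        (hlimD (x*y) z w).comp h2n
      have hprod : Tendsto (fun n => ((2:ℂ)^n • f (((2:ℂ)⁻¹)^n • x) z w) * y
          + x * ((2:ℂ)^n • f (((2:ℂ)⁻¹)^n • y) z w)) atTop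
          (nhds (D x z w * y + x * D y z w)) :=
        ((hlimD x z w).mul_const y).add ((hlimD y z w).const_mul x)
      have hid : ∀ n : ℕ, g (x*y) z w (2*n)
          - (((2:ℂ)^n • f (((2:ℂ)⁻¹)^n • x) z w) * y + x * ((2:ℂ)^n • f (((2:ℂ)⁻¹)^n • y) z w))
          = (2:ℂ)^(2*n) • (f ((((2:ℂ)⁻¹)^n • x) * (((2:ℂ)⁻¹)^n • y)) z w
            - f (((2:ℂ)⁻¹)^n • x) z w * (((2:ℂ)⁻¹)^n • y)
            - (((2:ℂ)⁻¹)^n • x) * f (((2:ℂ)⁻¹)^n • y) z w) := by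
        intro n
        have hsc2 : (2:ℂ)^(2*n) * ((2:ℂ)⁻¹)^n = (2:ℂ)^n := by
          rw [two_mul, pow_add, mul_assoc, hone n, mul_one]
        have harg : (((2:ℂ)⁻¹)^n • x) * (((2:ℂ)⁻¹)^n • y) = ((2:ℂ)⁻¹)^(2*n) • (x * y) := by
          rw [smul_mul_smul, ← pow_add, two_mul]
        have ht2 : (2:ℂ)^(2*n) • (f (((2:ℂ)⁻¹)^n • x) z w * (((2:ℂ)⁻¹)^n • y))
            = ((2:ℂ)^n • f (((2:ℂ)⁻¹)^n • x) z w) * y := by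
          rw [mul_smul_comm, smul_smul, hsc2, ← smul_mul_assoc]
        have ht3 : (2:ℂ)^(2*n) • ((((2:ℂ)⁻¹)^n • x) * f (((2:ℂ)⁻¹)^n • y) z w)
            = x * ((2:ℂ)^n • f (((2:ℂ)⁻¹)^n • y) z w) := by
          rw [smul_mul_assoc, smul_smul, hsc2, ← mul_smul_comm]
        rw [smul_sub, smul_sub, ht2, ht3, harg]
        simp only [hg]
        abel
      have hdiff : Tendsto (fun n => g (x*y) z w (2*n)
          - (((2:ℂ)^n • f (((2:ℂ)⁻¹)^n • x) z w) * y
            + x * ((2:ℂ)^n • f (((2:ℂ)⁻¹)^n • y) z w))) atTop (nhds 0) := by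
        rw [tendsto_zero_iff_norm_tendsto_zero]
        apply squeeze_zero (g := fun n => (θ * (‖x‖^r + ‖y‖^r) * ‖z‖^r * ‖w‖^r) * (4*t)^n)
          (fun n => norm_nonneg _)
        · intro n
          rw [hid n, hsc]
          calc (2:ℝ)^(2*n) * ‖f ((((2:ℂ)⁻¹)^n • x) * (((2:ℂ)⁻¹)^n • y)) z w
              - f (((2:ℂ)⁻¹)^n • x) z w * (((2:ℂ)⁻¹)^n • y)
              - (((2:ℂ)⁻¹)^n • x) * f (((2:ℂ)⁻¹)^n • y) z w‖
              ≤ (2:ℝ)^(2*n) * (θ * (‖((2:ℂ)⁻¹)^n • x‖^r + ‖((2:ℂ)⁻¹)^n • y‖^r) * ‖z‖^r * ‖w‖^r) := by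
                exact mul_le_mul_of_nonneg_left
                  (hder (((2:ℂ)⁻¹)^n • x) (((2:ℂ)⁻¹)^n • y) z w) (by positivity)
            _ = (θ * (‖x‖^r + ‖y‖^r) * ‖z‖^r * ‖w‖^r) * (4*t)^n := by
                rw [hscr, hscr, two_mul, pow_add,
                  show ((4:ℝ)*t)^n = 2^n*(2^n*t^n) from by
                    rw [show (4:ℝ)*t = 2*(2*t) from by ring, mul_pow, mul_pow]]
                ring
        · simpa using (tendsto_pow_atTop_nhds_zero_of_lt_one (by positivity) h4t).const_mul
            (θ * (‖x‖^r + ‖y‖^r) * ‖z‖^r * ‖w‖^r)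
      have hmain2 : Tendsto (fun n => g (x*y) z w (2*n)) atTop
          (nhds (D x z w * y + x * D y z w)) := by
        have h := hprod.add hdiff
        simp only [add_zero] at h
        refine Tendsto.congr (fun n => ?_) h
        abel
      exact tendsto_nhds_unique hmain hmain2
    · -- permutation invariance
      intro σ x
      rw [← sub_eq_zero]
      apply eq_zero_of_norm_le_geom (K := (2*B + θ) * (‖x 0‖^r * ‖x 1‖^r * ‖x 2‖^r))
        (ρ := 8*t^3) (by positivity) h8t3
      intro n
      have hprodperm : ‖x (σ 0)‖^r * ‖x (σ 1)‖^r * ‖x (σ 2)‖^r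
          = ‖x 0‖^r * ‖x 1‖^r * ‖x 2‖^r := by
        have h := Equiv.prod_comp σ (fun i => ‖x i‖^r)
        rwa [Fin.prod_univ_three, Fin.prod_univ_three] at h
      have hs3 : ∀ a b c : A, (2:ℂ)^n • ((2:ℂ)^n • ((2:ℂ)^n •
          D (((2:ℂ)⁻¹)^n • a) (((2:ℂ)⁻¹)^n • b) (((2:ℂ)⁻¹)^n • c))) = D a b c := by
        intro a b c
        rw [hCT.2.1, hCT.2.2.1, hCT.2.2.2, smul_smul, smul_smul, smul_smul, smul_smul, smul_smul]
        have h2n0 : (2:ℂ)^n ≠ 0 := pow_ne_zero _ two_ne_zero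
        convert one_smul ℂ (D a b c) using 2
        rw [inv_pow]
        field_simp
      have hv : D (x (σ 0)) (x (σ 1)) (x (σ 2)) - D (x 0) (x 1) (x 2)
          = (2:ℂ)^n • ((2:ℂ)^n • ((2:ℂ)^n •
            (D (((2:ℂ)⁻¹)^n • x (σ 0)) (((2:ℂ)⁻¹)^n • x (σ 1)) (((2:ℂ)⁻¹)^n • x (σ 2))
             - D (((2:ℂ)⁻¹)^n • x 0) (((2:ℂ)⁻¹)^n • x 1) (((2:ℂ)⁻¹)^n • x 2)))) := by
        rw [smul_sub, smul_sub, smul_sub, hs3, hs3]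
      rw [hv, hsc, hsc, hsc]
      have htri : ‖D (((2:ℂ)⁻¹)^n • x (σ 0)) (((2:ℂ)⁻¹)^n • x (σ 1)) (((2:ℂ)⁻¹)^n • x (σ 2))
          - D (((2:ℂ)⁻¹)^n • x 0) (((2:ℂ)⁻¹)^n • x 1) (((2:ℂ)⁻¹)^n • x 2)‖
          ≤ B * (‖((2:ℂ)⁻¹)^n • x (σ 0)‖^r * ‖((2:ℂ)⁻¹)^n • x (σ 1)‖^r * ‖((2:ℂ)⁻¹)^n • x (σ 2)‖^r)
            + (θ * ‖((2:ℂ)⁻¹)^n • x 0‖^r * ‖((2:ℂ)⁻¹)^n • x 1‖^r * ‖((2:ℂ)⁻¹)^n • x 2‖^r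
            + B * (‖((2:ℂ)⁻¹)^n • x 0‖^r * ‖((2:ℂ)⁻¹)^n • x 1‖^r * ‖((2:ℂ)⁻¹)^n • x 2‖^r)) := by
        have hsplit : D (((2:ℂ)⁻¹)^n • x (σ 0)) (((2:ℂ)⁻¹)^n • x (σ 1)) (((2:ℂ)⁻¹)^n • x (σ 2))
            - D (((2:ℂ)⁻¹)^n • x 0) (((2:ℂ)⁻¹)^n • x 1) (((2:ℂ)⁻¹)^n • x 2)
            = -(f (((2:ℂ)⁻¹)^n • x (σ 0)) (((2:ℂ)⁻¹)^n • x (σ 1)) (((2:ℂ)⁻¹)^n • x (σ 2))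
                - D (((2:ℂ)⁻¹)^n • x (σ 0)) (((2:ℂ)⁻¹)^n • x (σ 1)) (((2:ℂ)⁻¹)^n • x (σ 2)))
              + ((f (((2:ℂ)⁻¹)^n • x (σ 0)) (((2:ℂ)⁻¹)^n • x (σ 1)) (((2:ℂ)⁻¹)^n • x (σ 2))
                - f (((2:ℂ)⁻¹)^n • x 0) (((2:ℂ)⁻¹)^n • x 1) (((2:ℂ)⁻¹)^n • x 2))
              + (f (((2:ℂ)⁻¹)^n • x 0) (((2:ℂ)⁻¹)^n • x 1) (((2:ℂ)⁻¹)^n • x 2)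
                - D (((2:ℂ)⁻¹)^n • x 0) (((2:ℂ)⁻¹)^n • x 1) (((2:ℂ)⁻¹)^n • x 2))) := by abel
        rw [hsplit]
        refine (norm_add_le _ _).trans ?_
        gcongr
        · rw [norm_neg]
          exact hbd _ _ _
        · refine (norm_add_le _ _).trans ?_
          gcongr
          · simpa using hperm σ (fun i => ((2:ℂ)⁻¹)^n • x i)
          · exact hbd _ _ _
      calc (2:ℝ)^n * ((2:ℝ)^n * ((2:ℝ)^n *
            ‖D (((2:ℂ)⁻¹)^n • x (σ 0)) (((2:ℂ)⁻¹)^n • x (σ 1)) (((2:ℂ)⁻¹)^n • x (σ 2))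
            - D (((2:ℂ)⁻¹)^n • x 0) (((2:ℂ)⁻¹)^n • x 1) (((2:ℂ)⁻¹)^n • x 2)‖))
          ≤ (2:ℝ)^n * ((2:ℝ)^n * ((2:ℝ)^n *
            (B * (‖((2:ℂ)⁻¹)^n • x (σ 0)‖^r * ‖((2:ℂ)⁻¹)^n • x (σ 1)‖^r * ‖((2:ℂ)⁻¹)^n • x (σ 2)‖^r)
            + (θ * ‖((2:ℂ)⁻¹)^n • x 0‖^r * ‖((2:ℂ)⁻¹)^n • x 1‖^r * ‖((2:ℂ)⁻¹)^n • x 2‖^r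
            + B * (‖((2:ℂ)⁻¹)^n • x 0‖^r * ‖((2:ℂ)⁻¹)^n • x 1‖^r * ‖((2:ℂ)⁻¹)^n • x 2‖^r))))) := by
            gcongr <;> first | exact htri | positivity
        _ = (2*B + θ) * (‖x 0‖^r * ‖x 1‖^r * ‖x 2‖^r) * (8*t^3)^n := by
            rw [hscr, hscr, hscr, hscr, hscr, hscr,
              show ((8:ℝ)*t^3)^n = 2^n*(2^n*(2^n*(t^n*(t^n*t^n)))) from by
                rw [show (8:ℝ)*t^3 = 2*(2*(2*(t*(t*t)))) from by ring,
                  mul_pow, mul_pow, mul_pow, mul_pow, mul_pow]]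
            linear_combination (B * (2^n*(2^n*(2^n*(t^n*(t^n*t^n)))))) * hprodperm
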